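/- arXiv:2511.05837 — 8 statements merged into one kernel-verified Lean document; each statement's English description precedes it below -/
import Mathlib

section
/- Fix a ∈ ℝ². The map from (0,∞) × ℝ to ℝ² sending (q,r) to push_{ℓ(q,r)}(a) is continuous. -/
/-- The line in `ℝ²` with slope `q` and intercept `r`. -/
def line (q r : ℝ) : Set (ℝ × ℝ) := {p | p.2 = q * p.1 + r}

/-- Fix `a ∈ ℝ²`.  The map sending `(q,r) ∈ (0,∞) × ℝ` to the push of `a`
onto the line `ℓ(q,r)` (the least element, in the product order, of the set of points of
the line above `a`) is continuous. -/
theorem push_continuous (a : ℝ × ℝ) (push : ℝ × ℝ → ℝ × ℝ)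
    (hpush : ∀ p : ℝ × ℝ, 0 < p.1 → IsLeast {b ∈ line p.1 p.2 | a ≤ b} (push p)) :
    ContinuousOn push {p : ℝ × ℝ | 0 < p.1} := by
  set f : ℝ × ℝ → ℝ × ℝ := fun p =>
    (max a.1 ((a.2 - p.2) / p.1), p.1 * max a.1 ((a.2 - p.2) / p.1) + p.2) with hf
  have hleast : ∀ p : ℝ × ℝ, 0 < p.1 →
      IsLeast {b ∈ line p.1 p.2 | a ≤ b} (f p) := by
    intro p hp
    constructor
    · refine ⟨rfl, ?_, ?_⟩
      · exact le_max_left _ _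
      · have hx : (a.2 - p.2) / p.1 ≤ max a.1 ((a.2 - p.2) / p.1) := le_max_right _ _
        have := (div_le_iff₀ hp).mp hx
        simp only [f]
        linarith [mul_comm (max a.1 ((a.2 - p.2) / p.1)) p.1]
    · rintro b ⟨hb, hab⟩
      have hb2 : b.2 = p.1 * b.1 + p.2 := hb
      have h1 : a.1 ≤ b.1 := hab.1
      have h2 : a.2 ≤ b.2 := hab.2
      have hdiv : (a.2 - p.2) / p.1 ≤ b.1 := by
        rw [div_le_iff₀ hp]; nlinarith
      have hx : max a.1 ((a.2 - p.2) / p.1) ≤ b.1 := max_le h1 hdiv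
      constructor
      · exact hx
      · show p.1 * max a.1 ((a.2 - p.2) / p.1) + p.2 ≤ b.2
        rw [hb2]
        have := mul_le_mul_of_nonneg_left hx hp.le
        linarith
  have heq : ∀ p ∈ {p : ℝ × ℝ | 0 < p.1}, push p = f p := by
    intro p hp
    exact (hpush p hp).unique (hleast p hp)
  refine ContinuousOn.congr ?_ heq
  have hc1 : ContinuousOn (fun p : ℝ × ℝ => max a.1 ((a.2 - p.2) / p.1))
      {p : ℝ × ℝ | 0 < p.1} := by
    exact continuousOn_const.sup (ContinuousOn.div
      (continuous_const.sub continuous_snd).continuousOn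
      continuous_fst.continuousOn (fun p hp => ne_of_gt hp))
  exact hc1.prodMk ((continuousOn_fst.mul hc1).add continuousOn_snd)
end

section
/- Let q, r ∈ ℝ with q > 0, and let X ⊆ ℝ² be a finite nonempty set. Then push_{ℓ(q,r)}(⋁X) = max_{x ∈ X} push_{ℓ(q,r)}(x), where ⋁X denotes the join (componentwise supremum) of X in ℝ² and the maximum on the right is taken with respect to the product order, under which the set {push_{ℓ(q,r)}(x) : x ∈ X} ⊆ ℓ(q,r) is totally ordered. -/
/-- For `q > 0` and a finite nonempty `X ⊆ ℝ²`, the push of the join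
(componentwise supremum) of `X` onto `ℓ(q,r)` is the maximum, in the product order,
of the pushes of the elements of `X`. -/
theorem push_join_eq_max_push (q r : ℝ) (hq : 0 < q) (push : ℝ × ℝ → ℝ × ℝ)
    (hpush : ∀ x : ℝ × ℝ, IsLeast {b ∈ line q r | x ≤ b} (push x))
    (X : Finset (ℝ × ℝ)) (hX : X.Nonempty) :
    IsGreatest (push '' ↑X) (push (X.sup' hX id)) := by
  have mono : ∀ a b : ℝ × ℝ, a ≤ b → push a ≤ push b := by
    intro a b hab
    exact (hpush a).2 ⟨(hpush b).1.1, hab.trans (hpush b).1.2⟩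
  obtain ⟨x₀, hx₀, hmax⟩ := X.exists_max_image (fun x => (push x).1) hX
  have hline : ∀ x : ℝ × ℝ, (push x).2 = q * (push x).1 + r := fun x => (hpush x).1.1
  have hub : ∀ x ∈ X, push x ≤ push x₀ := by
    intro x hx
    refine ⟨hmax x hx, ?_⟩
    rw [hline x, hline x₀]
    have := hmax x hx
    nlinarith
  have hsup_le : push (X.sup' hX id) ≤ push x₀ := by
    apply (hpush (X.sup' hX id)).2
    refine ⟨(hpush x₀).1.1, ?_⟩
    apply Finset.sup'_le
    intro x hx
    exact le_trans (hpush x).1.2 (hub x hx)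
  have hge : push x₀ ≤ push (X.sup' hX id) :=
    mono _ _ (Finset.le_sup' id hx₀)
  have heq : push (X.sup' hX id) = push x₀ := le_antisymm hsup_le hge
  constructor
  · exact ⟨x₀, hx₀, heq.symm⟩
  · rintro y ⟨x, hx, rfl⟩
    rw [heq]; exact hub x hx
end

section
/- Let S ⊆ ℝ² be finite and let q, r ∈ ℝ with q > 0. Suppose the line ℓ(q,r) contains no anchor of S. Then there exists ε > 0 such that for all (q',r') ∈ (0,∞) × ℝ with |q' − q| < ε and |r' − r| < ε, and for all s, t ∈ S: push_{ℓ(q,r)}(s) ≤ push_{ℓ(q,r)}(t) if and only if push_{ℓ(q',r')}(s) ≤ push_{ℓ(q',r')}(t) (where ≤ is the product order, which is total on each line). -/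
/-- Two distinct points of `ℝ²` are weakly incomparable if they are incomparable in the
product order or share a coordinate. -/
def WeaklyIncomparable (s t : ℝ × ℝ) : Prop :=
  s ≠ t ∧ ((¬ s ≤ t ∧ ¬ t ≤ s) ∨ s.1 = t.1 ∨ s.2 = t.2)

/-- `α` is an anchor of the finite set `S ⊆ ℝ²` if it is the join of a weakly
incomparable pair of elements of `S`. -/
def IsAnchor (S : Finset (ℝ × ℝ)) (α : ℝ × ℝ) : Prop :=
  ∃ s ∈ S, ∃ t ∈ S, WeaklyIncomparable s t ∧ α = s ⊔ t

/-- The x-coordinate of the push of `a` onto the line `ℓ(q',r')`. -/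
noncomputable def pushX (q' r' : ℝ) (a : ℝ × ℝ) : ℝ := max a.1 ((a.2 - r') / q')

lemma isLeast_pushX (q' r' : ℝ) (hq' : 0 < q') (x : ℝ × ℝ) :
    IsLeast {b ∈ line q' r' | x ≤ b} (pushX q' r' x, q' * pushX q' r' x + r') := by
  constructor
  · refine ⟨rfl, ?_⟩
    rw [Prod.le_def]
    refine ⟨le_max_left _ _, ?_⟩
    have h : (x.2 - r') / q' ≤ pushX q' r' x := le_max_right _ _
    have := (div_le_iff₀ hq').mp h
    show x.2 ≤ q' * pushX q' r' x + r'
    nlinarith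
  · rintro b ⟨hb, hxb⟩
    rw [Prod.le_def] at hxb
    have hb2 : b.2 = q' * b.1 + r' := hb
    have hF : pushX q' r' x ≤ b.1 := by
      apply max_le hxb.1
      rw [div_le_iff₀ hq']
      nlinarith [hxb.2]
    rw [Prod.le_def, hb2]
    refine ⟨hF, ?_⟩
    show q' * pushX q' r' x + r' ≤ q' * b.1 + r'
    nlinarith

lemma contX (q r c : ℝ) (hq : q ≠ 0) :
    ContinuousAt (fun p : ℝ × ℝ => (c - p.2) / p.1) (q, r) :=
  (continuousAt_const.sub continuousAt_snd).div continuousAt_fst hq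

lemma contPushX (q r : ℝ) (hq : q ≠ 0) (a : ℝ × ℝ) :
    ContinuousAt (fun p : ℝ × ℝ => pushX p.1 p.2 a) (q, r) :=
  continuousAt_const.max (contX q r a.2 hq)

/-- Tie analysis: if two points push to the same spot on the line and the line contains
no anchors, then either they are equal, or they form a stable tie. -/
lemma WI_symm {s t : ℝ × ℝ} (h : WeaklyIncomparable t s) : WeaklyIncomparable s t := by
  obtain ⟨hne, h⟩ := h
  refine ⟨hne.symm, ?_⟩
  rcases h with ⟨a, b⟩ | h | h
  · exact Or.inl ⟨b, a⟩
  · exact Or.inr (Or.inl h.symm)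
  · exact Or.inr (Or.inr h.symm)

lemma tie_analysis (q r : ℝ) (hq : 0 < q) (s t : ℝ × ℝ)
    (hA : WeaklyIncomparable s t → (s ⊔ t) ∉ line q r)
    (h : pushX q r s = pushX q r t) :
    s = t ∨ (s.1 = t.1 ∧ (s.2 - r) / q < s.1 ∧ (t.2 - r) / q < t.1)
      ∨ (s.2 = t.2 ∧ s.1 < (s.2 - r) / q ∧ t.1 < (t.2 - r) / q) := by
  by_cases hst : s = t
  · exact Or.inl hst
  right
  have hsup1 : (s ⊔ t).1 = max s.1 t.1 := rfl
  have hsup2 : (s ⊔ t).2 = max s.2 t.2 := rfl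
  -- a helper: the mixed case yields a contradiction
  have mixed : ∀ u v : ℝ × ℝ, u ≠ v → pushX q r u = pushX q r v →
      (u.2 - r) / q ≤ u.1 → v.1 ≤ (v.2 - r) / q →
      WeaklyIncomparable u v ∧ (u ⊔ v) ∈ line q r := by
    intro u v huv hpw hu hv
    have hFu : pushX q r u = u.1 := max_eq_left hu
    have hFv : pushX q r v = (v.2 - r) / q := max_eq_right hv
    have hx : u.1 = (v.2 - r) / q := by rw [← hFu, hpw, hFv]
    have hv2 : v.2 = q * u.1 + r := by
      field_simp at hx; linarith
    have hv1 : v.1 ≤ u.1 := hx ▸ hv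
    have hu2 : u.2 ≤ v.2 := by
      rw [div_le_iff₀ hq] at hu
      nlinarith
    constructor
    · refine ⟨huv, ?_⟩
      rcases eq_or_lt_of_le hv1 with h1 | h1
      · exact Or.inr (Or.inl h1.symm)
      rcases eq_or_lt_of_le hu2 with h2 | h2
      · exact Or.inr (Or.inr h2)
      · exact Or.inl ⟨fun hle => absurd hle.1 (not_le.mpr h1),
          fun hle => absurd hle.2 (not_le.mpr h2)⟩
    · show (u ⊔ v).2 = q * (u ⊔ v).1 + r
      have e1 : (u ⊔ v).1 = u.1 := max_eq_left hv1
      have e2 : (u ⊔ v).2 = v.2 := max_eq_right hu2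
      rw [e1, e2, hv2]
  rcases le_or_gt ((s.2 - r) / q) s.1 with hs1 | hs1
  · rcases le_or_gt ((t.2 - r) / q) t.1 with ht1 | ht1
    · -- both max attained at first coordinate
      rcases eq_or_lt_of_le hs1 with he | he
      · -- boundary: s.1 ≤ gs too, symmetric mixed case
        obtain ⟨hw, hmem⟩ := mixed t s (Ne.symm hst) h.symm ht1 he.ge
        exact absurd (by rwa [sup_comm] at hmem) (hA (WI_symm hw))
      rcases eq_or_lt_of_le ht1 with he' | he'
      · obtain ⟨hw, hmem⟩ := mixed s t hst h hs1 he'.ge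
        exact absurd hmem (hA hw)
      · left
        refine ⟨?_, he, he'⟩
        have := h
        rwa [pushX, pushX, max_eq_left hs1, max_eq_left ht1] at this
    · -- mixed
      obtain ⟨hw, hmem⟩ := mixed s t hst h hs1 ht1.le
      exact absurd hmem (hA hw)
  · rcases le_or_gt ((t.2 - r) / q) t.1 with ht1 | ht1
    · -- symmetric mixed
      obtain ⟨hw, hmem⟩ := mixed t s (Ne.symm hst) h.symm ht1 hs1.le
      exact absurd (by rwa [sup_comm] at hmem) (hA (WI_symm hw))
    · right
      have h2 : (s.2 - r) / q = (t.2 - r) / q := by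
        have := h
        rwa [pushX, pushX, max_eq_right hs1.le, max_eq_right ht1.le] at this
      have : s.2 = t.2 := by
        field_simp at h2; linarith
      exact ⟨this, hs1, ht1⟩

/-- If the line `ℓ(q,r)` (with `q > 0`) contains no anchor of the finite set
`S ⊆ ℝ²`, then for all sufficiently small perturbations `ℓ(q',r')` of the line, the order
in which the elements of `S` push onto the line is unchanged. -/
theorem push_order_locally_constant (S : Finset (ℝ × ℝ)) (q r : ℝ) (hq : 0 < q)
    (push : ℝ → ℝ → ℝ × ℝ → ℝ × ℝ)
    (hpush : ∀ q' r' : ℝ, 0 < q' → ∀ x : ℝ × ℝ,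
      IsLeast {b ∈ line q' r' | x ≤ b} (push q' r' x))
    (hno : ∀ α : ℝ × ℝ, IsAnchor S α → α ∉ line q r) :
    ∃ ε > 0, ∀ q' r' : ℝ, 0 < q' → |q' - q| < ε → |r' - r| < ε →
      ∀ s ∈ S, ∀ t ∈ S, (push q r s ≤ push q r t ↔ push q' r' s ≤ push q' r' t) := by
  -- the push formula
  have hPf : ∀ q' r' : ℝ, 0 < q' → ∀ x : ℝ × ℝ,
      push q' r' x = (pushX q' r' x, q' * pushX q' r' x + r') := fun q' r' h x =>
    (hpush q' r' h x).unique (isLeast_pushX q' r' h x)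
  have hOrd : ∀ q' r' : ℝ, 0 < q' → ∀ s t : ℝ × ℝ,
      (push q' r' s ≤ push q' r' t ↔ pushX q' r' s ≤ pushX q' r' t) := by
    intro q' r' h s t
    rw [hPf q' r' h s, hPf q' r' h t, Prod.le_def]
    constructor
    · exact fun h => h.1
    · intro hle
      exact ⟨hle, by simpa using mul_le_mul_of_nonneg_left hle h.le⟩
  -- per-pair eventual statement
  have hpair : ∀ s ∈ S, ∀ t ∈ S, ∀ᶠ p : ℝ × ℝ in nhds (q, r),
      (pushX q r s ≤ pushX q r t ↔ pushX p.1 p.2 s ≤ pushX p.1 p.2 t) := by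
    intro s hs t ht
    rcases lt_trichotomy (pushX q r s) (pushX q r t) with hlt | heq | hgt
    · have := (contPushX q r hq.ne' s).eventually_lt (contPushX q r hq.ne' t) hlt
      filter_upwards [this] with p hp
      simp [hlt.le, hp.le]
    · have hA : WeaklyIncomparable s t → (s ⊔ t) ∉ line q r := fun hw =>
        hno _ ⟨s, hs, t, ht, hw, rfl⟩
      rcases tie_analysis q r hq s t hA heq with h1 | h2 | h3
      · subst h1; filter_upwards with p; simp
      · obtain ⟨he, hs2, ht2⟩ := h2
        have evs := (contX q r s.2 hq.ne').eventually_lt continuousAt_const hs2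
        have evt := (contX q r t.2 hq.ne').eventually_lt continuousAt_const ht2
        filter_upwards [evs, evt] with p hps hpt
        have e1 : pushX p.1 p.2 s = s.1 := max_eq_left hps.le
        have e2 : pushX p.1 p.2 t = t.1 := max_eq_left hpt.le
        simp [heq, e1, e2, he]
      · obtain ⟨he, hs2, ht2⟩ := h3
        have evs := continuousAt_const.eventually_lt (contX q r s.2 hq.ne') hs2
        have evt := continuousAt_const.eventually_lt (contX q r t.2 hq.ne') ht2
        filter_upwards [evs, evt] with p hps hpt
        have e1 : pushX p.1 p.2 s = (s.2 - p.2) / p.1 := max_eq_right hps.le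
        have e2 : pushX p.1 p.2 t = (t.2 - p.2) / p.1 := max_eq_right hpt.le
        simp [heq, e1, e2, he]
    · have := (contPushX q r hq.ne' t).eventually_lt (contPushX q r hq.ne' s) hgt
      filter_upwards [this] with p hp
      simp [not_le.mpr hgt, not_le.mpr hp]
  -- combine over all pairs
  have hall : ∀ᶠ p : ℝ × ℝ in nhds (q, r), ∀ s ∈ S, ∀ t ∈ S,
      (pushX q r s ≤ pushX q r t ↔ pushX p.1 p.2 s ≤ pushX p.1 p.2 t) := by
    rw [Filter.eventually_all_finset]
    intro s hs
    rw [Filter.eventually_all_finset]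
    intro t ht
    exact hpair s hs t ht
  rw [Metric.eventually_nhds_iff] at hall
  obtain ⟨ε, hε, hball⟩ := hall
  refine ⟨ε, hε, fun q' r' hq' hqd hrd s hs t ht => ?_⟩
  have hd : dist (q', r') (q, r) < ε := by
    rw [Prod.dist_eq]
    simp only [Real.dist_eq]
    exact max_lt hqd hrd
  rw [hOrd q r hq s t, hOrd q' r' hq' s t]
  exact hball hd s hs t ht
end

section
/- Let S ⊆ ℝ² be finite, and let γ : [0,1] → (0,∞) × ℝ be a continuous path, writing γ(τ) = (q_τ, r_τ), such that for every τ ∈ [0,1] the line ℓ(q_τ, r_τ) contains no anchor of S. Then for all s, t ∈ S: push_{ℓ(q_0,r_0)}(s) ≤ push_{ℓ(q_0,r_0)}(t) if and only if push_{ℓ(q_1,r_1)}(s) ≤ push_{ℓ(q_1,r_1)}(t) (where ≤ is the product order, which is total on each line). In particular, the totally ordered partition of S into level sets of the push map is the same at γ(0) and γ(1). -/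
/-- A continuous function on `[0,1]` that never vanishes has constant sign. -/
lemma aux_sign_const (f : ℝ → ℝ) (hf : ContinuousOn f (Set.Icc 0 1))
    (hne : ∀ τ ∈ Set.Icc (0:ℝ) 1, f τ ≠ 0) : (0 < f 0 ↔ 0 < f 1) := by
  have h01 : (0:ℝ) ≤ 1 := by norm_num
  have m0 : (0:ℝ) ∈ Set.Icc (0:ℝ) 1 := by constructor <;> norm_num
  have m1 : (1:ℝ) ∈ Set.Icc (0:ℝ) 1 := by constructor <;> norm_num
  constructor
  · intro h0
    by_contra h1
    have h1' : f 1 < 0 := lt_of_le_of_ne (not_lt.1 h1) (hne 1 m1)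
    obtain ⟨τ, hτ, hfτ⟩ := intermediate_value_Icc' h01 hf ⟨h1'.le, h0.le⟩
    exact hne τ hτ hfτ
  · intro h1
    by_contra h0
    have h0' : f 0 < 0 := lt_of_le_of_ne (not_lt.1 h0) (hne 0 m0)
    obtain ⟨τ, hτ, hfτ⟩ := intermediate_value_Icc h01 hf ⟨h0'.le, h1.le⟩
    exact hne τ hτ hfτ

/-- The push map in explicit coordinates. -/
lemma aux_push_eq (push : ℝ × ℝ → ℝ × ℝ → ℝ × ℝ) (p : ℝ × ℝ) (hp : 0 < p.1)
    (hpush : ∀ x : ℝ × ℝ, IsLeast {b ∈ line p.1 p.2 | x ≤ b} (push p x)) (x : ℝ × ℝ) :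
    push p x = (max x.1 ((x.2 - p.2) / p.1),
      p.1 * max x.1 ((x.2 - p.2) / p.1) + p.2) := by
  set m := max x.1 ((x.2 - p.2) / p.1) with hm
  refine (hpush x).unique ⟨⟨?_, ?_, ?_⟩, ?_⟩
  · show (p.1 * m + p.2) = p.1 * m + p.2; rfl
  · exact le_max_left _ _
  · have : (x.2 - p.2) / p.1 ≤ m := le_max_right _ _
    have := (div_le_iff₀ hp).1 this
    show x.2 ≤ p.1 * m + p.2
    nlinarith
  · rintro b ⟨hbl, hxb⟩
    have hb2 : b.2 = p.1 * b.1 + p.2 := hbl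
    have h1 : x.1 ≤ b.1 := hxb.1
    have h2 : x.2 ≤ b.2 := hxb.2
    have hdiv : (x.2 - p.2) / p.1 ≤ b.1 := by
      rw [div_le_iff₀ hp]; nlinarith
    have hmb : m ≤ b.1 := max_le h1 hdiv
    refine ⟨hmb, ?_⟩
    show p.1 * m + p.2 ≤ b.2
    rw [hb2]; nlinarith [mul_le_mul_of_nonneg_left hmb hp.le]

/-- Order of pushes in terms of `max (q x₁ + r) x₂`. -/
lemma aux_push_le_iff (push : ℝ × ℝ → ℝ × ℝ → ℝ × ℝ) (p : ℝ × ℝ) (hp : 0 < p.1)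
    (hpush : ∀ x : ℝ × ℝ, IsLeast {b ∈ line p.1 p.2 | x ≤ b} (push p x)) (s t : ℝ × ℝ) :
    (push p s ≤ push p t ↔
      max (p.1 * s.1 + p.2) s.2 ≤ max (p.1 * t.1 + p.2) t.2) := by
  have key : ∀ x : ℝ × ℝ, p.1 * max x.1 ((x.2 - p.2) / p.1) + p.2
      = max (p.1 * x.1 + p.2) x.2 := by
    intro x
    have hmono : Monotone (fun y : ℝ => p.1 * y + p.2) := by
      intro a b hab; dsimp; nlinarith
    have := hmono.map_max (a := x.1) (b := (x.2 - p.2) / p.1)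
    rw [this]
    congr 1
    field_simp
    ring
  rw [aux_push_eq push p hp hpush s, aux_push_eq push p hp hpush t, Prod.mk_le_mk,
    key s, key t]
  constructor
  · exact fun h => h.2
  · intro h
    refine ⟨?_, h⟩
    rw [← key s, ← key t] at h
    nlinarith [le_max_left (p.1 * s.1 + p.2) s.2]

/-- Along a continuous path `γ : [0,1] → (0,∞) × ℝ` of (parameters of) lines,
none of which contains an anchor of the finite set `S ⊆ ℝ²`, the order in which the
elements of `S` push onto the corresponding lines is the same at `γ(0)` and `γ(1)`. -/
theorem push_order_constant_along_path (S : Finset (ℝ × ℝ)) (γ : ℝ → ℝ × ℝ)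
    (hγ : ContinuousOn γ (Set.Icc 0 1))
    (hpos : ∀ τ ∈ Set.Icc (0:ℝ) 1, 0 < (γ τ).1)
    (hno : ∀ τ ∈ Set.Icc (0:ℝ) 1, ∀ α : ℝ × ℝ, IsAnchor S α → α ∉ line (γ τ).1 (γ τ).2)
    (push : ℝ × ℝ → ℝ × ℝ → ℝ × ℝ)
    (hpush : ∀ p : ℝ × ℝ, 0 < p.1 → ∀ x : ℝ × ℝ,
      IsLeast {b ∈ line p.1 p.2 | x ≤ b} (push p x)) :
    ∀ s ∈ S, ∀ t ∈ S,
      (push (γ 0) s ≤ push (γ 0) t ↔ push (γ 1) s ≤ push (γ 1) t) := by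
  intro s hs t ht
  have m0 : (0:ℝ) ∈ Set.Icc (0:ℝ) 1 := by constructor <;> norm_num
  have m1 : (1:ℝ) ∈ Set.Icc (0:ℝ) 1 := by constructor <;> norm_num
  -- abbreviations
  set q : ℝ → ℝ := fun τ => (γ τ).1 with hq
  set r : ℝ → ℝ := fun τ => (γ τ).2 with hr
  have hqc : ContinuousOn q (Set.Icc 0 1) := hγ.fst
  have hrc : ContinuousOn r (Set.Icc 0 1) := hγ.snd
  have hiff : ∀ τ ∈ Set.Icc (0:ℝ) 1,
      (push (γ τ) s ≤ push (γ τ) t ↔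
        max (q τ * s.1 + r τ) s.2 ≤ max (q τ * t.1 + r τ) t.2) := by
    intro τ hτ
    exact aux_push_le_iff push (γ τ) (hpos τ hτ) (hpush (γ τ) (hpos τ hτ)) s t
  rw [hiff 0 m0, hiff 1 m1]
  -- the sign function
  set F : ℝ → ℝ := fun τ => max (q τ * t.1 + r τ) t.2 - max (q τ * s.1 + r τ) s.2 with hF
  have hFc : ContinuousOn F (Set.Icc 0 1) := by
    apply ContinuousOn.sub
    · exact ((hqc.mul continuousOn_const).add hrc).sup continuousOn_const
    · exact ((hqc.mul continuousOn_const).add hrc).sup continuousOn_const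
  have hFiff : ∀ τ, (max (q τ * s.1 + r τ) s.2 ≤ max (q τ * t.1 + r τ) t.2) ↔ 0 ≤ F τ := by
    intro τ; simp only [hF, sub_nonneg]
  rw [hFiff 0, hFiff 1]
  -- case analysis on coordinates
  have hq' : ∀ τ ∈ Set.Icc (0:ℝ) 1, 0 < q τ := hpos
  -- trivial cases: s ≤ t gives F ≥ 0 everywhere
  have htriv : s.1 ≤ t.1 → s.2 ≤ t.2 → (0 ≤ F 0 ↔ 0 ≤ F 1) := by
    intro ha hb
    have key : ∀ τ ∈ Set.Icc (0:ℝ) 1, 0 ≤ F τ := by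
      intro τ hτ
      have hqτ := hq' τ hτ
      have : q τ * s.1 + r τ ≤ q τ * t.1 + r τ := by nlinarith
      have := max_le_max this hb
      simp only [hF, sub_nonneg]
      exact this
    simp [key 0 m0, key 1 m1]
  -- strictly reversed case: F < 0 everywhere
  have hrev : t.1 < s.1 → t.2 < s.2 → (0 ≤ F 0 ↔ 0 ≤ F 1) := by
    intro ha hb
    have key : ∀ τ ∈ Set.Icc (0:ℝ) 1, F τ < 0 := by
      intro τ hτ
      have hqτ := hq' τ hτ
      have h' : q τ * t.1 + r τ < q τ * s.1 + r τ := by nlinarith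
      have := max_lt_max h' hb
      simp only [hF, sub_neg]
      exact this
    constructor <;> intro h
    · exact absurd h (not_le.2 (key 0 m0))
    · exact absurd h (not_le.2 (key 1 m1))
  -- incomparable cases: F never vanishes
  have hinc : ∀ τ ∈ Set.Icc (0:ℝ) 1,
      ((s.1 < t.1 ∧ t.2 < s.2) ∨ (t.1 < s.1 ∧ s.2 < t.2)) → F τ ≠ 0 := by
    intro τ hτ hcase h0
    have hqτ := hq' τ hτ
    have hFτ : max (q τ * t.1 + r τ) t.2 = max (q τ * s.1 + r τ) s.2 := by
      have : F τ = 0 := h0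
      simp only [hF] at this
      linarith
    rcases hcase with ⟨ha, hb⟩ | ⟨ha, hb⟩
    · -- anchor (t.1, s.2) on the line
      have hwi : WeaklyIncomparable s t := by
        refine ⟨?_, Or.inl ⟨?_, ?_⟩⟩
        · intro he; rw [he] at hb; exact lt_irrefl _ hb
        · intro hle; exact absurd hle.2 (not_le.2 hb)
        · intro hle; exact absurd hle.1 (not_le.2 ha)
      have hanch : IsAnchor S (t.1, s.2) := by
        refine ⟨s, hs, t, ht, hwi, ?_⟩
        rw [Prod.sup_def]
        have e1 : s.1 ⊔ t.1 = t.1 := sup_eq_right.2 ha.le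
        have e2 : s.2 ⊔ t.2 = s.2 := sup_eq_left.2 hb.le
        rw [e1, e2]
      have := hno τ hτ _ hanch
      simp only [line, Set.mem_setOf_eq] at this
      apply this
      show s.2 = q τ * t.1 + r τ
      have hst : q τ * s.1 + r τ < q τ * t.1 + r τ := by nlinarith
      rcases max_cases (q τ * t.1 + r τ) t.2 with ⟨e1, l1⟩ | ⟨e1, l1⟩ <;>
        rcases max_cases (q τ * s.1 + r τ) s.2 with ⟨e2, l2⟩ | ⟨e2, l2⟩ <;> linarith
    · -- anchor (s.1, t.2) on the line
      have hwi : WeaklyIncomparable s t := by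
        refine ⟨?_, Or.inl ⟨?_, ?_⟩⟩
        · intro he; rw [he] at ha; exact lt_irrefl _ ha
        · intro hle; exact absurd hle.1 (not_le.2 ha)
        · intro hle; exact absurd hle.2 (not_le.2 hb)
      have hanch : IsAnchor S (s.1, t.2) := by
        refine ⟨s, hs, t, ht, hwi, ?_⟩
        rw [Prod.sup_def]
        have e1 : s.1 ⊔ t.1 = s.1 := sup_eq_left.2 ha.le
        have e2 : s.2 ⊔ t.2 = t.2 := sup_eq_right.2 hb.le
        rw [e1, e2]
      have := hno τ hτ _ hanch
      simp only [line, Set.mem_setOf_eq] at this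
      apply this
      show t.2 = q τ * s.1 + r τ
      have hst : q τ * t.1 + r τ < q τ * s.1 + r τ := by nlinarith
      rcases max_cases (q τ * t.1 + r τ) t.2 with ⟨e1, l1⟩ | ⟨e1, l1⟩ <;>
        rcases max_cases (q τ * s.1 + r τ) s.2 with ⟨e2, l2⟩ | ⟨e2, l2⟩ <;> linarith
  -- case analysis on coordinates
  rcases lt_trichotomy s.1 t.1 with h1 | h1 | h1 <;>
    rcases lt_trichotomy s.2 t.2 with h2 | h2 | h2
  · exact htriv h1.le h2.le
  · exact htriv h1.le h2.le
  · -- s.1 < t.1, t.2 < s.2 : incomparable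
    have hne : ∀ τ ∈ Set.Icc (0:ℝ) 1, F τ ≠ 0 := fun τ hτ => hinc τ hτ (Or.inl ⟨h1, h2⟩)
    have := aux_sign_const F hFc hne
    constructor <;> intro h
    · exact (this.1 (h.lt_of_ne (Ne.symm (hne 0 m0)))).le
    · exact (this.2 (h.lt_of_ne (Ne.symm (hne 1 m1)))).le
  · exact htriv h1.le h2.le
  · exact htriv h1.le h2.le
  · -- s.1 = t.1, t.2 < s.2 : shared first coordinate, anchor is s
    have hwi : WeaklyIncomparable s t := by
      refine ⟨?_, Or.inr (Or.inl h1)⟩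
      intro he; rw [he] at h2; exact lt_irrefl _ h2
    have hanch : IsAnchor S s := by
      refine ⟨s, hs, t, ht, hwi, ?_⟩
      rw [Prod.sup_def]
      have e1 : s.1 ⊔ t.1 = s.1 := sup_eq_left.2 h1.ge
      have e2 : s.2 ⊔ t.2 = s.2 := sup_eq_left.2 h2.le
      rw [e1, e2]
    set G : ℝ → ℝ := fun τ => q τ * s.1 + r τ - s.2 with hG
    have hGc : ContinuousOn G (Set.Icc 0 1) :=
      ((hqc.mul continuousOn_const).add hrc).sub continuousOn_const
    have hGne : ∀ τ ∈ Set.Icc (0:ℝ) 1, G τ ≠ 0 := by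
      intro τ hτ h0
      have := hno τ hτ _ hanch
      simp only [line, Set.mem_setOf_eq] at this
      apply this
      show s.2 = q τ * s.1 + r τ
      simp only [hG] at h0
      linarith
    have heqv : ∀ τ ∈ Set.Icc (0:ℝ) 1, (0 ≤ F τ ↔ 0 < G τ) := by
      intro τ hτ
      have hqτ := hq' τ hτ
      have hGτ : q τ * s.1 + r τ - s.2 ≠ 0 := hGne τ hτ
      have hA : q τ * s.1 + r τ = q τ * t.1 + r τ := by rw [h1]
      show (0 ≤ (q τ * t.1 + r τ) ⊔ t.2 - (q τ * s.1 + r τ) ⊔ s.2) ↔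
        0 < q τ * s.1 + r τ - s.2
      rcases lt_trichotomy (q τ * s.1 + r τ) s.2 with hc | hc | hc
      · -- both sides false
        have hL : (q τ * t.1 + r τ) ⊔ t.2 < (q τ * s.1 + r τ) ⊔ s.2 :=
          lt_of_lt_of_le (max_lt (by linarith) h2) (le_max_right _ _)
        constructor
        · intro h; linarith
        · intro h; linarith
      · exact absurd (by linarith) hGτ
      · -- both sides true
        have e2 : (q τ * s.1 + r τ) ⊔ s.2 = q τ * s.1 + r τ := max_eq_left hc.le
        have hL : (q τ * s.1 + r τ) ⊔ s.2 ≤ (q τ * t.1 + r τ) ⊔ t.2 := by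
          rw [e2, hA]; exact le_max_left _ _
        constructor
        · intro _; linarith
        · intro _; linarith
    have := aux_sign_const G hGc hGne
    rw [heqv 0 m0, heqv 1 m1]
    exact this
  · -- t.1 < s.1, s.2 < t.2 : incomparable
    have hne : ∀ τ ∈ Set.Icc (0:ℝ) 1, F τ ≠ 0 := fun τ hτ => hinc τ hτ (Or.inr ⟨h1, h2⟩)
    have := aux_sign_const F hFc hne
    constructor <;> intro h
    · exact (this.1 (h.lt_of_ne (Ne.symm (hne 0 m0)))).le
    · exact (this.2 (h.lt_of_ne (Ne.symm (hne 1 m1)))).le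
  · -- t.1 < s.1, s.2 = t.2 : shared second coordinate, anchor is s
    have hwi : WeaklyIncomparable s t := by
      refine ⟨?_, Or.inr (Or.inr h2)⟩
      intro he; rw [he] at h1; exact lt_irrefl _ h1
    have hanch : IsAnchor S s := by
      refine ⟨s, hs, t, ht, hwi, ?_⟩
      rw [Prod.sup_def]
      have e1 : s.1 ⊔ t.1 = s.1 := sup_eq_left.2 h1.le
      have e2 : s.2 ⊔ t.2 = s.2 := sup_eq_left.2 h2.ge
      rw [e1, e2]
    set G : ℝ → ℝ := fun τ => s.2 - (q τ * s.1 + r τ) with hG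
    have hGc : ContinuousOn G (Set.Icc 0 1) :=
      continuousOn_const.sub ((hqc.mul continuousOn_const).add hrc)
    have hGne : ∀ τ ∈ Set.Icc (0:ℝ) 1, G τ ≠ 0 := by
      intro τ hτ h0
      have := hno τ hτ _ hanch
      simp only [line, Set.mem_setOf_eq] at this
      apply this
      show s.2 = q τ * s.1 + r τ
      simp only [hG] at h0
      linarith
    have heqv : ∀ τ ∈ Set.Icc (0:ℝ) 1, (0 ≤ F τ ↔ 0 < G τ) := by
      intro τ hτ
      have hqτ := hq' τ hτ
      have hGτ : s.2 - (q τ * s.1 + r τ) ≠ 0 := hGne τ hτ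
      have hst : q τ * t.1 + r τ < q τ * s.1 + r τ := by nlinarith
      show (0 ≤ (q τ * t.1 + r τ) ⊔ t.2 - (q τ * s.1 + r τ) ⊔ s.2) ↔
        0 < s.2 - (q τ * s.1 + r τ)
      rw [← h2]
      rcases lt_trichotomy (q τ * s.1 + r τ) s.2 with hc | hc | hc
      · -- both sides true : everything pushes to height s.2
        have e1 : (q τ * s.1 + r τ) ⊔ s.2 = s.2 := max_eq_right hc.le
        have hL : (q τ * s.1 + r τ) ⊔ s.2 ≤ (q τ * t.1 + r τ) ⊔ s.2 := by
          rw [e1]; exact le_max_right _ _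
        constructor
        · intro _; linarith
        · intro _; linarith
      · exact absurd (by linarith) hGτ
      · -- both sides false
        have hL : (q τ * t.1 + r τ) ⊔ s.2 < (q τ * s.1 + r τ) ⊔ s.2 :=
          lt_of_lt_of_le (max_lt (by linarith) hc) (le_max_left _ _)
        constructor
        · intro h; linarith
        · intro h; linarith
    have := aux_sign_const G hGc hGne
    rw [heqv 0 m0, heqv 1 m1]
    exact this
  · exact hrev h1 h2
end

section
/- Let K be a field and let A be an m × n matrix over K. Then there exist an m × n matrix R over K and an invertible upper-triangular n × n matrix U over K such that A = R·U and R is reduced, i.e., for any two distinct indices j ≠ j' of nonzero columns of R, the largest row index of a nonzero entry of column j differs from the largest row index of a nonzero entry of column j'. -/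
/-- A matrix `R` is reduced if for every pair of distinct nonzero columns, the maximal row
indices of their nonzero entries are distinct. -/
def Matrix.Reduced {K : Type} [Field K] {m n : ℕ} (R : Matrix (Fin m) (Fin n) K) : Prop :=
  ∀ (j j' : Fin n) (i i' : Fin m), j ≠ j' →
    IsGreatest {k : Fin m | R k j ≠ 0} i → IsGreatest {k : Fin m | R k j' ≠ 0} i' → i ≠ i'

open Classical in
private noncomputable def pivHt {K : Type} [Field K] {m n : ℕ}
    (A : Matrix (Fin m) (Fin n) K) (j : Fin n) : ℕ :=
  (Finset.univ.filter fun i => A i j ≠ 0).sup fun i => (i : ℕ) + 1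

private noncomputable def rumeasure {K : Type} [Field K] {m n : ℕ}
    (A : Matrix (Fin m) (Fin n) K) : ℕ :=
  ∑ j, pivHt A j

private lemma pivHt_congr {K : Type} [Field K] {m n : ℕ}
    {A B : Matrix (Fin m) (Fin n) K} {j : Fin n} (h : ∀ a, A a j = B a j) :
    pivHt A j = pivHt B j := by
  unfold pivHt
  congr 1
  ext i
  simp [h i]

private lemma mul_transvection_entry {K : Type} [Field K] {m n : ℕ}
    (A : Matrix (Fin m) (Fin n) K) (j j' : Fin n) (c : K) (a : Fin m) (b : Fin n) :
    (A * Matrix.transvection j j' c) a b = A a b + (if b = j' then c * A a j else 0) := by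
  simp only [Matrix.transvection, Matrix.mul_apply, Matrix.add_apply, Matrix.single,
    Matrix.of_apply, Matrix.one_apply, ite_and, mul_add, mul_ite, mul_one, mul_zero,
    Finset.sum_add_distrib, Finset.sum_ite_eq', Finset.mem_univ, if_true]
  congr 1
  by_cases hb : j' = b
  · subst hb
    simp [Finset.sum_ite_eq, eq_comm, mul_comm]
  · simp [hb, Ne.symm hb, Finset.sum_ite_of_false]

private lemma bt_transvection {K : Type} [Field K] {n : ℕ} {j j' : Fin n}
    (h : j ≤ j') (c : K) : (Matrix.transvection j j' c).BlockTriangular id := by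
  intro a b hab
  simp only [id_eq] at hab
  have hne : a ≠ b := (ne_of_gt hab)
  simp only [Matrix.transvection, Matrix.add_apply, Matrix.one_apply, if_neg hne.symm,
    Matrix.single, Matrix.of_apply]
  have hno : ¬(j = a ∧ j' = b) := by
    rintro ⟨rfl, rfl⟩
    exact absurd h (not_le.2 hab)
  simp [hno, hne]

private lemma isUnit_transvection {K : Type} [Field K] {n : ℕ} {j j' : Fin n}
    (h : j ≠ j') (c : K) : IsUnit (Matrix.transvection j j' c) := by
  rw [Matrix.isUnit_iff_isUnit_det, Matrix.det_transvection_of_ne j j' h c]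
  exact isUnit_one

private lemma aux_RU {K : Type} [Field K] {m n : ℕ} :
    ∀ (N : ℕ) (A : Matrix (Fin m) (Fin n) K), rumeasure A ≤ N →
    ∃ (R : Matrix (Fin m) (Fin n) K) (U : Matrix (Fin n) (Fin n) K),
      A = R * U ∧ R.Reduced ∧ U.BlockTriangular id ∧ IsUnit U := by
  classical
  intro N
  induction N using Nat.strong_induction_on with
  | _ N IH =>
    intro A hA
    by_cases hred : A.Reduced
    · exact ⟨A, 1, by simp, hred, Matrix.blockTriangular_one, isUnit_one⟩
    · -- extract a conflict
      simp only [Matrix.Reduced, not_forall] at hred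
      obtain ⟨j, j', i, i', hjj, hg, hg', hii⟩ := hred
      rw [not_ne_iff] at hii
      subst hii
      -- wlog j < j'
      have key : ∀ (j j' : Fin n), j < j' →
          IsGreatest {k : Fin m | A k j ≠ 0} i → IsGreatest {k : Fin m | A k j' ≠ 0} i →
          ∃ (R : Matrix (Fin m) (Fin n) K) (U : Matrix (Fin n) (Fin n) K),
            A = R * U ∧ R.Reduced ∧ U.BlockTriangular id ∧ IsUnit U := by
        clear hg hg' hjj j j'
        intro j j' hlt hg hg'
        have hjj' : j ≠ j' := ne_of_lt hlt
        set c : K := -(A i j' / A i j) with hc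
        set B := A * Matrix.transvection j j' c with hB
        have hAij : A i j ≠ 0 := hg.1
        have hBother : ∀ a b, b ≠ j' → B a b = A a b := by
          intro a b hb
          rw [hB, mul_transvection_entry, if_neg hb, add_zero]
        have hBj' : ∀ a, B a j' = A a j' + c * A a j := by
          intro a
          rw [hB, mul_transvection_entry, if_pos rfl]
        -- rows ≥ i of column j' of B vanish
        have hzero : ∀ k : Fin m, i ≤ k → B k j' = 0 := by
          intro k hk
          rcases eq_or_lt_of_le hk with rfl | hk
          · rw [hBj', hc]
            field_simp
            ring
          · have h1 : A k j = 0 := by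
              by_contra h
              exact absurd (hg.2 h) (not_le.2 hk)
            have h2 : A k j' = 0 := by
              by_contra h
              exact absurd (hg'.2 h) (not_le.2 hk)
            rw [hBj', h1, h2]; ring
        -- measure decreases
        have hpivB : pivHt B j' ≤ (i : ℕ) := by
          unfold pivHt
          apply Finset.sup_le
          intro k hk
          simp only [Finset.mem_filter] at hk
          have : ¬ i ≤ k := fun h => hk.2 (hzero k h)
          omega
        have hpivA : (i : ℕ) + 1 ≤ pivHt A j' := by
          unfold pivHt
          apply Finset.le_sup (f := fun i : Fin m => (i : ℕ) + 1)
          simp only [Finset.mem_filter, Finset.mem_univ, true_and]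
          exact hg'.1
        have hmeas : rumeasure B < rumeasure A := by
          unfold rumeasure
          apply Finset.sum_lt_sum
          · intro b _
            by_cases hb : b = j'
            · subst hb; omega
            · exact le_of_eq (pivHt_congr fun a => (hBother a b hb).symm).symm
          · exact ⟨j', Finset.mem_univ _, by omega⟩
        obtain ⟨R, U', hRU, hR, hU'bt, hU'u⟩ := IH (rumeasure B) (lt_of_lt_of_le hmeas hA) B le_rfl
        refine ⟨R, U' * Matrix.transvection j j' (-c), ?_, hR, ?_, ?_⟩
        · have h1 : Matrix.transvection j j' c * Matrix.transvection j j' (-c) = 1 := by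
            rw [Matrix.transvection_mul_transvection_same j j' hjj' c (-c)]
            simp [Matrix.transvection_zero]
          calc A = A * (Matrix.transvection j j' c * Matrix.transvection j j' (-c)) := by
                  rw [h1, Matrix.mul_one]
            _ = B * Matrix.transvection j j' (-c) := by rw [hB, Matrix.mul_assoc]
            _ = R * (U' * Matrix.transvection j j' (-c)) := by
                  rw [hRU, Matrix.mul_assoc]
        · exact hU'bt.mul (bt_transvection (le_of_lt hlt) (-c))
        · exact hU'u.mul (isUnit_transvection hjj' (-c))
      rcases lt_or_gt_of_ne hjj with h | h
      · exact key j j' h hg hg'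
      · exact key j' j h hg' hg

/-- Every `m × n` matrix `A` over a field admits an `RU`-decomposition
`A = R·U` with `R` reduced and `U` invertible and upper triangular. -/
theorem exists_RU_decomposition {K : Type} [Field K] {m n : ℕ}
    (A : Matrix (Fin m) (Fin n) K) :
    ∃ (R : Matrix (Fin m) (Fin n) K) (U : Matrix (Fin n) (Fin n) K),
      A = R * U ∧ R.Reduced ∧ U.BlockTriangular id ∧ IsUnit U := by
  exact aux_RU (rumeasure A) A le_rfl
end

section
/- Let K be a field, and let η : F → F' be a natural transformation of functors from the poset ℝ² (product order) to K-vector spaces, where F = ⊕_{i=1}^{n} K^⟨pᵢ⟩ and F' = ⊕_{j=1}^{n'} K^⟨p'ⱼ⟩ are finitely generated free bipersistence modules. Let M = coker η, and let S = {p₁,…,pₙ} ∪ {p'₁,…,p'_{n'}}. If a ≤ b in ℝ² and {s ∈ S : s ≤ a} = {s ∈ S : s ≤ b}, then the structure map M_{a,b} : M_a → M_b is an isomorphism. -/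
/-- The free bipersistence module `⊕ᵢ K^⟨pᵢ⟩` at the grade `a ∈ ℝ²`: the space of tuples
`(cᵢ)` with `cᵢ ∈ K^⟨pᵢ⟩_a`, i.e. functions `Fin n → K` supported on `{i | pᵢ ≤ a}`
(recall `K^⟨p⟩_a = K` if `p ≤ a` and `0` otherwise). -/
def freeAt (K : Type) [Field K] {n : ℕ} (p : Fin n → ℝ × ℝ) (a : ℝ × ℝ) :
    Submodule K (Fin n → K) where
  carrier := {f | ∀ i, ¬ p i ≤ a → f i = 0}
  zero_mem' := fun _ _ => rfl
  add_mem' := by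
    intro f g hf hg i hi
    simp [hf i hi, hg i hi]
  smul_mem' := by
    intro c f hf i hi
    simp [hf i hi]

/-- The supports are monotone in the grade, giving the structure maps
(inclusions) of a free bipersistence module. -/
theorem freeAt_mono (K : Type) [Field K] {n : ℕ} (p : Fin n → ℝ × ℝ) {a b : ℝ × ℝ}
    (hab : a ≤ b) : freeAt K p a ≤ freeAt K p b := by
  intro f hf i hi
  exact hf i fun h => hi (h.trans hab)

/-- Let `η : F → F'` be a natural transformation of finitely generated free
bipersistence modules, `F = ⊕ᵢ K^⟨pᵢ⟩` and `F' = ⊕ⱼ K^⟨p'ⱼ⟩`, and let `M = coker η`,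
computed pointwise: `M_a = F'_a / im(η_a)`.  Let `S` be the union of the grades `pᵢ` and
`p'ⱼ`.  If `a ≤ b` and `{s ∈ S : s ≤ a} = {s ∈ S : s ≤ b}`, then the induced structure map
`M_{a,b} : M_a → M_b` (i.e. any linear map commuting with the quotient projections and the
structure map of `F'`) is an isomorphism. -/
theorem coker_structure_map_iso (K : Type) [Field K] {n n' : ℕ}
    (p : Fin n → ℝ × ℝ) (p' : Fin n' → ℝ × ℝ)
    (η : ∀ a : ℝ × ℝ, freeAt K p a →ₗ[K] freeAt K p' a)
    (hnat : ∀ (a b : ℝ × ℝ) (hab : a ≤ b) (x : freeAt K p a),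
      η b (Submodule.inclusion (freeAt_mono K p hab) x) =
        Submodule.inclusion (freeAt_mono K p' hab) (η a x))
    (a b : ℝ × ℝ) (hab : a ≤ b)
    (hS : ∀ s : ℝ × ℝ, ((∃ i, p i = s) ∨ (∃ j, p' j = s)) → (s ≤ a ↔ s ≤ b))
    (ψ : (freeAt K p' a ⧸ LinearMap.range (η a)) →ₗ[K]
      (freeAt K p' b ⧸ LinearMap.range (η b)))
    (hψ : ∀ x : freeAt K p' a,
      ψ (Submodule.Quotient.mk x) =
        Submodule.Quotient.mk (Submodule.inclusion (freeAt_mono K p' hab) x)) :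
    Function.Bijective ψ := by
  have hmem : ∀ f : Fin n → K, f ∈ freeAt K p b → f ∈ freeAt K p a := by
    intro f hf i hi
    exact hf i fun h => hi ((hS (p i) (Or.inl ⟨i, rfl⟩)).mpr h)
  have hmem' : ∀ f : Fin n' → K, f ∈ freeAt K p' b → f ∈ freeAt K p' a := by
    intro f hf i hi
    exact hf i fun h => hi ((hS (p' i) (Or.inr ⟨i, rfl⟩)).mpr h)
  constructor
  · rw [← LinearMap.ker_eq_bot, eq_bot_iff]
    intro q hq
    obtain ⟨x, rfl⟩ := Submodule.Quotient.mk_surjective _ q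
    rw [LinearMap.mem_ker, hψ, Submodule.Quotient.mk_eq_zero] at hq
    obtain ⟨y, hy⟩ := hq
    set y' : freeAt K p a := ⟨y.1, hmem y.1 y.2⟩ with hy'
    have hyy : Submodule.inclusion (freeAt_mono K p hab) y' = y := Subtype.ext rfl
    have hx : η a y' = x := by
      have h1 := hnat a b hab y'
      rw [hyy, hy] at h1
      exact Submodule.inclusion_injective _ h1.symm
    simp only [Submodule.mem_bot]
    rw [Submodule.Quotient.mk_eq_zero]
    exact ⟨y', hx⟩
  · intro q
    obtain ⟨y, rfl⟩ := Submodule.Quotient.mk_surjective _ q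
    refine ⟨Submodule.Quotient.mk ⟨y.1, hmem' y.1 y.2⟩, ?_⟩
    rw [hψ]
    congr 1
end

section
/- Let K be a field, T a finite linear order, U a linear order, and G : T → U monotone; extend G to Ĝ : T ∪ {∞} → U ∪ {∞} (adjoining a top element to each order) by Ĝ(∞) = ∞. Let N : T → Vect_K be a finite direct sum of interval modules, N ≅ ⊕_{i=1}^{n} I[sᵢ, tᵢ), with sᵢ ∈ T and tᵢ ∈ T ∪ {∞}, sᵢ < tᵢ. Then the pointwise left Kan extension of N along G satisfies Lan_G N ≅ ⊕_{i : Ĝ(sᵢ) < Ĝ(tᵢ)} I[G(sᵢ), Ĝ(tᵢ)), the direct sum of interval modules over those indices i for which Ĝ(sᵢ) < Ĝ(tᵢ). -/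
open CategoryTheory CategoryTheory.Limits

def intervalSumCarrier (K : Type) [Field K] {V ι : Type} [LinearOrder V]
    (s : ι → V) (t : ι → WithTop V) (x : V) : Submodule K (ι → K) where
  carrier := {f | ∀ i, ¬ (s i ≤ x ∧ (x : WithTop V) < t i) → f i = 0}
  zero_mem' := fun _ _ => rfl
  add_mem' := by
    intro f g hf hg i hi
    simp [hf i hi, hg i hi]
  smul_mem' := by
    intro c f hf i hi
    simp [hf i hi]

def intervalSumMap (K : Type) [Field K] {V ι : Type} [LinearOrder V]
    (s : ι → V) (t : ι → WithTop V) {x y : V} (h : x ≤ y) :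
    intervalSumCarrier K s t x →ₗ[K] intervalSumCarrier K s t y where
  toFun f :=
    ⟨fun i => if (y : WithTop V) < t i then f.1 i else 0, by
      intro i hi
      by_cases hy : (y : WithTop V) < t i
      · simp only [if_pos hy]
        exact f.2 i fun hx => (hi ⟨hx.1.trans h, hy⟩).elim
      · simp [hy]⟩
  map_add' f g := by
    apply Subtype.ext
    funext i
    by_cases hy : (y : WithTop V) < t i <;> simp [hy]
  map_smul' c f := by
    apply Subtype.ext
    funext i
    by_cases hy : (y : WithTop V) < t i <;> simp [hy]

theorem intervalSumMap_apply (K : Type) [Field K] {V ι : Type} [LinearOrder V]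
    (s : ι → V) (t : ι → WithTop V) {x y : V} (h : x ≤ y)
    (f : intervalSumCarrier K s t x) (i : ι) :
    (intervalSumMap K s t h f).1 i = if (y : WithTop V) < t i then f.1 i else 0 := rfl

def intervalSum (K : Type) [Field K] {V ι : Type} [LinearOrder V]
    (s : ι → V) (t : ι → WithTop V) : V ⥤ ModuleCat K where
  obj x := ModuleCat.of K (intervalSumCarrier K s t x)
  map {x y} h := ModuleCat.ofHom (intervalSumMap K s t (leOfHom h))
  map_id x := by
    apply ModuleCat.hom_ext
    apply LinearMap.ext
    intro f
    apply Subtype.ext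
    funext i
    show (if (x : WithTop V) < t i then f.1 i else 0) = f.1 i
    by_cases hx : (x : WithTop V) < t i
    · simp [hx]
    · rw [if_neg hx]
      exact (f.2 i fun hc => hx hc.2).symm
  map_comp {x y z} h h' := by
    apply ModuleCat.hom_ext
    apply LinearMap.ext
    intro f
    apply Subtype.ext
    funext i
    show (if (z : WithTop V) < t i then f.1 i else 0)
        = (if (z : WithTop V) < t i then (if (y : WithTop V) < t i then f.1 i else 0) else 0)
    by_cases hz : (z : WithTop V) < t i
    · have hy : (y : WithTop V) < t i :=
        lt_of_le_of_lt (WithTop.coe_le_coe.mpr (leOfHom h')) hz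
      simp [hz, hy]
    · simp [hz]

section KanAux

set_option linter.unusedSectionVars false

variable {K T U : Type} [Field K] [LinearOrder T] [Fintype T] [LinearOrder U]
  (G : T →o U) {n : ℕ} (s : Fin n → T) (t : Fin n → WithTop T)

/-- If `G y < t.map G` in `WithTop U`, then `y < t` in `WithTop T`. -/
theorem lt_of_map_lt {y : T} {tt : WithTop T}
    (h : ((G y : U) : WithTop U) < tt.map G) : (y : WithTop T) < tt := by
  cases tt with
  | top => exact WithTop.coe_lt_top y
  | coe τ =>
    rw [WithTop.map_coe, WithTop.coe_lt_coe] at h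
    rw [WithTop.coe_lt_coe]
    by_contra hc
    exact absurd (G.monotone (not_lt.mp hc)) (not_le.mpr h)

/-- The direct sum of interval modules appearing as the left Kan extension. -/
def kanIntervalSum : U ⥤ ModuleCat K :=
  intervalSum K (ι := {i : Fin n // ((G (s i) : U) : WithTop U) < (t i).map G})
    (fun i => G (s i.1)) (fun i => (t i.1).map G)

/-- The unit of the left Kan extension. -/
def kanUnit : intervalSum K s t ⟶ G.monotone.functor ⋙ kanIntervalSum G s t where
  app x := ModuleCat.ofHom
    { toFun := fun f =>
        ⟨fun i => if ((G x : U) : WithTop U) < (t i.1).map G then f.1 i.1 else 0, by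
          intro i hi
          show (if ((G x : U) : WithTop U) < (t i.1).map G then f.1 i.1 else 0) = 0
          by_cases hg : ((G x : U) : WithTop U) < (t i.1).map G
          · rw [if_pos hg]
            refine f.2 i.1 fun hc => hi ?_
            exact ⟨G.monotone hc.1, hg⟩
          · rw [if_neg hg]⟩
      map_add' := fun f g => by
        apply Subtype.ext
        funext i
        show (if ((G x : U) : WithTop U) < (t i.1).map G then (f + g).1 i.1 else 0)
          = (if ((G x : U) : WithTop U) < (t i.1).map G then f.1 i.1 else 0)
            + (if ((G x : U) : WithTop U) < (t i.1).map G then g.1 i.1 else 0)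
        by_cases hg : ((G x : U) : WithTop U) < (t i.1).map G
        · simp only [if_pos hg]; rfl
        · simp [hg]
      map_smul' := fun c f => by
        apply Subtype.ext
        funext i
        show (if ((G x : U) : WithTop U) < (t i.1).map G then (c • f).1 i.1 else 0)
          = c • (if ((G x : U) : WithTop U) < (t i.1).map G then f.1 i.1 else 0)
        by_cases hg : ((G x : U) : WithTop U) < (t i.1).map G
        · simp only [if_pos hg]; rfl
        · simp [hg] }
  naturality {x y} h := by
    apply ModuleCat.hom_ext
    apply LinearMap.ext
    intro f
    apply Subtype.ext
    funext i
    show (if ((G y : U) : WithTop U) < (t i.1).map G then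
        (if (y : WithTop T) < t i.1 then f.1 i.1 else 0) else 0)
      = (if ((G y : U) : WithTop U) < (t i.1).map G then
        (if ((G x : U) : WithTop U) < (t i.1).map G then f.1 i.1 else 0) else 0)
    by_cases hgy : ((G y : U) : WithTop U) < (t i.1).map G
    · have hy : (y : WithTop T) < t i.1 := lt_of_map_lt G hgy
      have hgx : ((G x : U) : WithTop U) < (t i.1).map G :=
        lt_of_le_of_lt (WithTop.coe_le_coe.mpr (G.monotone (leOfHom h))) hgy
      simp [hgy, hy, hgx]
    · simp [hgy]

/-- The left extension given by `kanIntervalSum` and `kanUnit` is a pointwise left Kan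
extension. -/
noncomputable def kanIsPointwise :
    (Functor.LeftExtension.mk _ (kanUnit (K := K) G s t)).IsPointwiseLeftKanExtension := by
  intro u
  by_cases hne : ∃ x : T, G x ≤ u
  · -- nonempty case: the comma category has a maximum
    set S : Finset T := Finset.univ.filter (fun x => G x ≤ u) with hS
    have hSne : S.Nonempty := by
      obtain ⟨x, hx⟩ := hne
      exact ⟨x, by simp [hS, hx]⟩
    set xm : T := S.max' hSne with hxmdef
    have hGxm : G xm ≤ u := by
      have := S.max'_mem hSne
      simpa [hS] using this
    have hmax : ∀ τ : T, G τ ≤ u → τ ≤ xm := fun τ hτ =>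
      S.le_max' τ (by simp [hS, hτ])
    have xmIff : ∀ tt : WithTop T, ((xm : WithTop T) < tt) ↔ ((u : WithTop U) < tt.map G) := by
      intro tt
      cases tt with
      | top => simp
      | coe τ =>
        rw [WithTop.map_coe, WithTop.coe_lt_coe, WithTop.coe_lt_coe]
        constructor
        · intro h
          by_contra hc
          exact absurd (hmax τ (not_lt.mp hc)) (not_le.mpr h)
        · intro h
          by_contra hc
          exact absurd (le_trans (G.monotone (not_lt.mp hc)) hGxm) (not_le.mpr h)
    -- the comparison map from the value at u back to the value of N' at xm
    let φ : ((kanIntervalSum (K := K) G s t).obj u) →ₗ[K] ((intervalSum K s t).obj xm) :=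
      { toFun := fun g =>
          ⟨fun i => if h : ((G (s i) : U) : WithTop U) < (t i).map G then g.1 ⟨i, h⟩ else 0, by
            intro i hi
            show (if h : ((G (s i) : U) : WithTop U) < (t i).map G then g.1 ⟨i, h⟩ else 0) = 0
            by_cases h : ((G (s i) : U) : WithTop U) < (t i).map G
            · rw [dif_pos h]
              refine g.2 ⟨i, h⟩ fun hc => hi ?_
              refine ⟨hmax (s i) hc.1, (xmIff (t i)).mpr hc.2⟩
            · rw [dif_neg h]⟩
        map_add' := fun f g => by
          apply Subtype.ext
          funext i
          show (if h : ((G (s i) : U) : WithTop U) < (t i).map G then (f + g).1 ⟨i, h⟩ else 0)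
            = (if h : ((G (s i) : U) : WithTop U) < (t i).map G then f.1 ⟨i, h⟩ else 0)
              + (if h : ((G (s i) : U) : WithTop U) < (t i).map G then g.1 ⟨i, h⟩ else 0)
          by_cases h : ((G (s i) : U) : WithTop U) < (t i).map G
          · simp only [dif_pos h]; rfl
          · simp [h]
        map_smul' := fun c f => by
          apply Subtype.ext
          funext i
          show (if h : ((G (s i) : U) : WithTop U) < (t i).map G then (c • f).1 ⟨i, h⟩ else 0)
            = c • (if h : ((G (s i) : U) : WithTop U) < (t i).map G then f.1 ⟨i, h⟩ else 0)
          by_cases h : ((G (s i) : U) : WithTop U) < (t i).map G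
          · simp only [dif_pos h]; rfl
          · simp [h] }
    let φ' : ((kanIntervalSum (K := K) G s t).obj u) ⟶ ((intervalSum K s t).obj xm) :=
      ModuleCat.ofHom φ
    let jm : CostructuredArrow G.monotone.functor u :=
      CostructuredArrow.mk (homOfLE hGxm : G.monotone.functor.obj xm ⟶ u)
    refine
      { desc := fun c => φ' ≫ c.ι.app jm
        fac := fun c j => ?_
        uniq := fun c m hm => ?_ }
    · -- fac
      have hxle : j.left ≤ xm := hmax j.left (leOfHom j.hom)
      let ψ : j ⟶ jm := CostructuredArrow.homMk (homOfLE hxle) (Subsingleton.elim _ _)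
      rw [← c.w ψ]
      have key : ((Functor.LeftExtension.mk _ (kanUnit (K := K) G s t)).coconeAt u).ι.app j ≫ φ' =
          (CostructuredArrow.proj G.monotone.functor u ⋙ intervalSum K s t).map ψ := by
        apply ModuleCat.hom_ext
        apply LinearMap.ext
        intro f
        apply Subtype.ext
        funext i
        show (if h : ((G (s i) : U) : WithTop U) < (t i).map G then
            (if (u : WithTop U) < (t i).map G then
              (if ((G j.left : U) : WithTop U) < (t i).map G then f.1 i else 0) else 0) else 0)
          = (if (xm : WithTop T) < t i then f.1 i else 0)
        by_cases hxt : (xm : WithTop T) < t i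
        · have hu : (u : WithTop U) < (t i).map G := (xmIff (t i)).mp hxt
          by_cases hfi : f.1 i = 0
          · by_cases h : ((G (s i) : U) : WithTop U) < (t i).map G <;> simp [h, hfi]
          · have hmem : s i ≤ j.left ∧ (j.left : WithTop T) < t i := by
              by_contra hc
              exact hfi (f.2 i hc)
            have hgx : ((G j.left : U) : WithTop U) < (t i).map G :=
              lt_of_le_of_lt (WithTop.coe_le_coe.mpr (leOfHom j.hom)) hu
            have hcond : ((G (s i) : U) : WithTop U) < (t i).map G :=
              lt_of_le_of_lt (WithTop.coe_le_coe.mpr (G.monotone hmem.1)) hgx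
            simp [hcond, hu, hgx, hxt]
        · have hu : ¬ (u : WithTop U) < (t i).map G := fun hc => hxt ((xmIff (t i)).mpr hc)
          by_cases h : ((G (s i) : U) : WithTop U) < (t i).map G <;> simp [h, hu, hxt]
      exact (Category.assoc _ _ _).symm.trans (congrArg (fun k => k ≫ c.ι.app jm) key)
    · -- uniq
      have hid : φ' ≫ ((Functor.LeftExtension.mk _ (kanUnit (K := K) G s t)).coconeAt u).ι.app jm =
          𝟙 ((kanIntervalSum G s t).obj u) := by
        apply ModuleCat.hom_ext
        apply LinearMap.ext
        intro g
        apply Subtype.ext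
        funext i
        show (if (u : WithTop U) < (t i.1).map G then
            (if ((G xm : U) : WithTop U) < (t i.1).map G then
              (if h : ((G (s i.1) : U) : WithTop U) < (t i.1).map G then g.1 ⟨i.1, h⟩ else 0)
            else 0) else 0) = g.1 i
        by_cases hu : (u : WithTop U) < (t i.1).map G
        · have hgxm : ((G xm : U) : WithTop U) < (t i.1).map G :=
            lt_of_le_of_lt (WithTop.coe_le_coe.mpr hGxm) hu
          simp [hu, hgxm, i.2]
        · rw [if_neg hu]
          exact (g.2 i fun hc => hu hc.2).symm
      have := hm jm
      show m = φ' ≫ c.ι.app jm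
      rw [← this]
      exact ((Category.id_comp m).symm.trans (congrArg (fun k => k ≫ m) hid.symm)).trans (Category.assoc _ _ _)
  · -- empty case
    push_neg at hne
    refine
      { desc := fun c => 0
        fac := fun c j => absurd (leOfHom j.hom) (not_le.mpr (hne j.left))
        uniq := fun c m hm => ?_ }
    · apply ModuleCat.hom_ext
      apply LinearMap.ext
      intro g
      have hg : g = 0 := by
        apply Subtype.ext
        funext i
        exact g.2 i fun hc => absurd hc.1 (not_le.mpr (hne (s i.1)))
      rw [hg]
      simp

end KanAux

set_option maxHeartbeats 2000000

set_option synthInstance.maxHeartbeats 1000000 in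
/-- Let `T` be a finite linear order, `U` a linear order, `G : T → U`
monotone, extended to `Ĝ : T ∪ {∞} → U ∪ {∞}` by `Ĝ(∞) = ∞`.  If
`N : T ⥤ Vect_K` is a finite direct sum of interval modules, `N ≅ ⊕ᵢ I[sᵢ, tᵢ)` with
`sᵢ < tᵢ`, then the pointwise left Kan extension of `N` along `G` is isomorphic to the
direct sum of the interval modules `I[G(sᵢ), Ĝ(tᵢ))` over those indices `i` with
`Ĝ(sᵢ) < Ĝ(tᵢ)`. -/
theorem pointwiseLeftKanExtension_intervalSum
    {K T U : Type} [Field K] [LinearOrder T] [Fintype T] [LinearOrder U]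
    (G : T →o U) (n : ℕ) (s : Fin n → T) (t : Fin n → WithTop T)
    (hst : ∀ i, (s i : WithTop T) < t i)
    (N : T ⥤ ModuleCat K) (hN : Nonempty (N ≅ intervalSum K s t)) :
    Nonempty (G.monotone.functor.pointwiseLeftKanExtension N ≅
      intervalSum K (ι := {i : Fin n // ((G (s i) : U) : WithTop U) < (t i).map G})
        (fun i => G (s i.1)) (fun i => (t i.1).map G)) := by
  obtain ⟨e⟩ := hN
  haveI h1 : (intervalSum K (ι := {i : Fin n // ((G (s i) : U) : WithTop U) < (t i).map G})
      (fun i => G (s i.1)) (fun i => (t i.1).map G)).IsLeftKanExtension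
      (kanUnit (K := K) G s t) :=
    (kanIsPointwise G s t).isLeftKanExtension
  haveI h2 : (G.monotone.functor.pointwiseLeftKanExtension N).IsLeftKanExtension
      (e.inv ≫ G.monotone.functor.pointwiseLeftKanExtensionUnit N) :=
    (Functor.isLeftKanExtension_iff_of_iso₂
      (G.monotone.functor.pointwiseLeftKanExtensionUnit N)
      (e.inv ≫ G.monotone.functor.pointwiseLeftKanExtensionUnit N) e (Iso.refl _)
      (by simp)).mp inferInstance
  exact ⟨Functor.leftKanExtensionUnique _
    (e.inv ≫ G.monotone.functor.pointwiseLeftKanExtensionUnit N) _ (kanUnit (K := K) G s t)⟩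
end

section
/- Let K be a field, m, n ∈ ℕ, and p₁,…,pₘ, q₁,…,qₙ ∈ ℝ². If the functors ⊕_{i=1}^{m} K^⟨pᵢ⟩ and ⊕_{j=1}^{n} K^⟨qⱼ⟩ from the poset ℝ² (product order) to K-vector spaces are naturally isomorphic, then m = n and the multiset {p₁,…,pₘ} equals the multiset {q₁,…,qₙ}. In particular, the function β^F : ℝ² → ℕ recording, for a finitely generated free bipersistence module F, the multiplicity of each grade, is independent of the chosen decomposition of F. -/
open Finset in
private lemma incl_excl_aux {k : ℕ} (f : Fin k → ℝ × ℝ) (x : ℝ × ℝ) (ε : ℝ) (hε : 0 < ε)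
    (h1 : ∀ i, (f i).1 < x.1 → ε ≤ x.1 - (f i).1)
    (h2 : ∀ i, (f i).2 < x.2 → ε ≤ x.2 - (f i).2) :
    (univ.filter fun i => f i = x).card
      + (univ.filter fun i => f i ≤ (x.1 - ε, x.2)).card
      + (univ.filter fun i => f i ≤ (x.1, x.2 - ε)).card
    = (univ.filter fun i => f i ≤ x).card
      + (univ.filter fun i => f i ≤ (x.1 - ε, x.2 - ε)).card := by
  classical
  set A := univ.filter fun i => f i ≤ x with hA
  set B := univ.filter fun i => f i ≤ (x.1 - ε, x.2) with hB
  set C := univ.filter fun i => f i ≤ (x.1, x.2 - ε) with hC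
  have hBC_sub : B ∪ C ⊆ A := by
    intro i hi
    simp only [hA, hB, hC, mem_union, mem_filter, mem_univ, true_and, Prod.le_def] at hi ⊢
    rcases hi with ⟨ha, hb⟩ | ⟨ha, hb⟩
    · exact ⟨ha.trans (by linarith), hb⟩
    · exact ⟨ha, hb.trans (by linarith)⟩
  have hE : (univ.filter fun i => f i = x) = A \ (B ∪ C) := by
    ext i
    simp only [hA, hB, hC, mem_sdiff, mem_union, mem_filter, mem_univ, true_and,
      Prod.le_def, not_or]
    constructor
    · intro h
      rw [h]
      exact ⟨⟨le_rfl, le_rfl⟩, fun h' => by linarith [h'.1], fun h' => by linarith [h'.2]⟩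
    · rintro ⟨⟨hx1, hx2⟩, hB', hC'⟩
      have e1 : (f i).1 = x.1 := by
        by_contra hne
        have hlt : (f i).1 < x.1 := lt_of_le_of_ne hx1 hne
        exact hB' ⟨by linarith [h1 i hlt], hx2⟩
      have e2 : (f i).2 = x.2 := by
        by_contra hne
        have hlt : (f i).2 < x.2 := lt_of_le_of_ne hx2 hne
        exact hC' ⟨hx1, by linarith [h2 i hlt]⟩
      exact Prod.ext e1 e2
  have hD : B ∩ C = univ.filter fun i => f i ≤ (x.1 - ε, x.2 - ε) := by
    ext i
    simp only [hB, hC, mem_inter, mem_filter, mem_univ, true_and, Prod.le_def]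
    constructor
    · rintro ⟨⟨a1, a2⟩, ⟨b1, b2⟩⟩
      exact ⟨a1, b2⟩
    · rintro ⟨a1, b2⟩
      exact ⟨⟨a1, by linarith⟩, ⟨by linarith, b2⟩⟩
  have key1 := Finset.card_sdiff_add_card_eq_card hBC_sub
  have key2 := Finset.card_union_add_card_inter B C
  rw [hE, ← hD]
  omega

private lemma finrank_freeAt (K : Type) [Field K] {m : ℕ} (p : Fin m → ℝ × ℝ) (a : ℝ × ℝ) :
    Module.finrank K (freeAt K p a) = (Finset.univ.filter fun i => p i ≤ a).card := by
  classical
  let e : freeAt K p a ≃ₗ[K] ({i : Fin m // p i ≤ a} → K) :=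
  { toFun := fun f i => (f : Fin m → K) i.1
    map_add' := fun f g => rfl
    map_smul' := fun c f => rfl
    invFun := fun g => ⟨fun i => if h : p i ≤ a then g ⟨i, h⟩ else 0,
      fun i hi => dif_neg hi⟩
    left_inv := fun f => by
      ext i
      by_cases h : p i ≤ a
      · simp [dif_pos h]
      · simp only [dif_neg h]
        exact (f.2 i h).symm
    right_inv := fun g => by
      ext i
      simp [dif_pos i.2] }
  rw [e.finrank_eq, Module.finrank_fintype_fun_eq_card, Fintype.card_subtype]

/-- If the finitely generated free bipersistence modules `⊕ᵢ K^⟨pᵢ⟩` and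
`⊕ⱼ K^⟨qⱼ⟩` are naturally isomorphic (i.e. there is a family of linear equivalences of
the fibers commuting with the structure maps), then `m = n` and the multisets of grades
`{p₁,…,pₘ}` and `{q₁,…,qₙ}` coincide.  In particular the Betti-number function `β^F` of a
finitely generated free bipersistence module is independent of the chosen decomposition. -/
theorem free_grades_unique (K : Type) [Field K] {m n : ℕ}
    (p : Fin m → ℝ × ℝ) (q : Fin n → ℝ × ℝ)
    (e : ∀ a : ℝ × ℝ, freeAt K p a ≃ₗ[K] freeAt K q a)
    (hnat : ∀ (a b : ℝ × ℝ) (hab : a ≤ b) (x : freeAt K p a),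
      e b (Submodule.inclusion (freeAt_mono K p hab) x) =
        Submodule.inclusion (freeAt_mono K q hab) (e a x)) :
    m = n ∧ (↑(List.ofFn p) : Multiset (ℝ × ℝ)) = ↑(List.ofFn q) := by
  classical
  have hcount : ∀ a : ℝ × ℝ, (Finset.univ.filter fun i => p i ≤ a).card
      = (Finset.univ.filter fun j => q j ≤ a).card := by
    intro a
    rw [← finrank_freeAt K p a, ← finrank_freeAt K q a, (e a).finrank_eq]
  have hmult : ∀ x : ℝ × ℝ, (Finset.univ.filter fun i => p i = x).card
      = (Finset.univ.filter fun j => q j = x).card := by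
    intro x
    set S : Finset ℝ :=
      ((Finset.univ.image fun i => x.1 - (p i).1) ∪ (Finset.univ.image fun i => x.2 - (p i).2)
        ∪ (Finset.univ.image fun j => x.1 - (q j).1)
        ∪ (Finset.univ.image fun j => x.2 - (q j).2)).filter (fun d => 0 < d) with hSdef
    set ε : ℝ := if h : S.Nonempty then S.min' h / 2 else 1 with hεdef
    have hε0 : 0 < ε := by
      rw [hεdef]
      split_ifs with h
      · have := (Finset.mem_filter.mp (S.min'_mem h)).2
        linarith
      · norm_num
    have hεle : ∀ d ∈ S, ε ≤ d := by
      intro d hd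
      have hne : S.Nonempty := ⟨d, hd⟩
      have hpos := (Finset.mem_filter.mp (S.min'_mem hne)).2
      have hle := S.min'_le d hd
      rw [hεdef, dif_pos hne]
      linarith
    have hmem : ∀ d, (0 < d) →
        (d ∈ (Finset.univ.image fun i => x.1 - (p i).1)
          ∪ (Finset.univ.image fun i => x.2 - (p i).2)
          ∪ (Finset.univ.image fun j => x.1 - (q j).1)
          ∪ (Finset.univ.image fun j => x.2 - (q j).2)) → ε ≤ d := by
      intro d hd hmem'
      exact hεle d (Finset.mem_filter.mpr ⟨hmem', hd⟩)
    have h1p : ∀ i, (p i).1 < x.1 → ε ≤ x.1 - (p i).1 := by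
      intro i hi
      refine hmem _ (by linarith) ?_
      simp only [Finset.mem_union, Finset.mem_image]
      exact Or.inl (Or.inl (Or.inl ⟨i, Finset.mem_univ i, rfl⟩))
    have h2p : ∀ i, (p i).2 < x.2 → ε ≤ x.2 - (p i).2 := by
      intro i hi
      refine hmem _ (by linarith) ?_
      simp only [Finset.mem_union, Finset.mem_image]
      exact Or.inl (Or.inl (Or.inr ⟨i, Finset.mem_univ i, rfl⟩))
    have h1q : ∀ j, (q j).1 < x.1 → ε ≤ x.1 - (q j).1 := by
      intro j hj
      refine hmem _ (by linarith) ?_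
      simp only [Finset.mem_union, Finset.mem_image]
      exact Or.inl (Or.inr ⟨j, Finset.mem_univ j, rfl⟩)
    have h2q : ∀ j, (q j).2 < x.2 → ε ≤ x.2 - (q j).2 := by
      intro j hj
      refine hmem _ (by linarith) ?_
      simp only [Finset.mem_union, Finset.mem_image]
      exact Or.inr ⟨j, Finset.mem_univ j, rfl⟩
    have hp := incl_excl_aux p x ε hε0 h1p h2p
    have hq := incl_excl_aux q x ε hε0 h1q h2q
    have c1 := hcount x
    have c2 := hcount (x.1 - ε, x.2)
    have c3 := hcount (x.1, x.2 - ε)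
    have c4 := hcount (x.1 - ε, x.2 - ε)
    omega
  have hms : (↑(List.ofFn p) : Multiset (ℝ × ℝ)) = ↑(List.ofFn q) := by
    refine Multiset.ext.mpr fun x => ?_
    rw [← Fin.univ_val_map p, ← Fin.univ_val_map q, Multiset.count_map, Multiset.count_map]
    have h1 : Finset.univ.val.filter (fun i => x = p i)
        = (Finset.univ.filter fun i => p i = x).val := by
      rw [Finset.filter_val]
      exact Multiset.filter_congr fun i _ => by constructor <;> exact Eq.symm
    have h2 : Finset.univ.val.filter (fun j => x = q j)
        = (Finset.univ.filter fun j => q j = x).val := by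
      rw [Finset.filter_val]
      exact Multiset.filter_congr fun j _ => by constructor <;> exact Eq.symm
    rw [h1, h2]
    exact hmult x
  refine ⟨?_, hms⟩
  have := congrArg Multiset.card hms
  simpa using this
end
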